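/- Quantum exponential relation in the doubly-laced case (eq. (g1212), QE, of the paper): let u, v ∈ A, and define c := (u·v − v·u)/(q_s − q_s⁻¹) and d := (q_s⁻¹·c·v − q_s·v·c)/(q − q⁻¹). Assume u·c = q²·c·u, c·d = q²·d·c, d·v = q²·v·d, and (q⁻¹·u·d − q·d·u)/(q − q⁻¹) = c²/(q_s + q_s⁻¹)². Then Ψ_{q_s}^{(1)}(c + v) = Ψ_{q_s}^{(1)}(c) · Ψ_q^{(2)}((q_s + q_s⁻¹)·d) · Ψ_{q_s}^{(1)}(v) in A[[T]]. -/

import Mathlib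

/-- The formal quantum dilogarithm series
`Ψ_p⁽ᵐ⁾(a) = Σ_{n≥0} (p^{n²} / ∏_{k=1}^{n}(1 − p^{2k})) aⁿ T^{mn}`
in the formal power series ring `A[[T]]`. -/
noncomputable def Psi {K : Type*} [Field K] (A : Type*) [Ring A] [Algebra K A]
    (p : K) (m : ℕ) (a : A) : PowerSeries A :=
  PowerSeries.mk fun n =>
    if m ∣ n then
      (p ^ ((n / m) ^ 2) / ∏ k ∈ Finset.Icc 1 (n / m), (1 - p ^ (2 * k))) • a ^ (n / m)
    else 0

open PowerSeries

namespace QDL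

variable {K : Type*} [Field K] {A : Type*} [Ring A] [Algebra K A]

noncomputable def alf (p : K) (n : ℕ) : K :=
  p ^ (n ^ 2) / ∏ k ∈ Finset.Icc 1 n, (1 - p ^ (2 * k))

lemma coeff_Psi (p : K) (m : ℕ) (a : A) (n : ℕ) :
    coeff n (Psi A p m a) = if m ∣ n then alf p (n / m) • a ^ (n / m) else 0 := by
  simp [Psi, alf, coeff_mk]

lemma alf_zero (p : K) : alf p 0 = 1 := by simp [alf]

lemma prodD_ne_zero (p : K) (hp : ∀ n : ℕ, 1 ≤ n → p ^ n ≠ 1) (n : ℕ) :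
    (∏ k ∈ Finset.Icc 1 n, (1 - p ^ (2 * k))) ≠ 0 := by
  apply Finset.prod_ne_zero_iff.mpr
  intro k hk
  simp only [Finset.mem_Icc] at hk
  exact sub_ne_zero.mpr (Ne.symm (hp (2 * k) (by omega)))

lemma alf_succ (p : K) (hp : ∀ n : ℕ, 1 ≤ n → p ^ n ≠ 1) (n : ℕ) :
    (1 - p ^ (2 * (n + 1))) * alf p (n + 1) = p ^ (2 * n + 1) * alf p n := by
  unfold alf
  rw [Finset.prod_Icc_succ_top (by omega : 1 ≤ n + 1)]
  have h1 : (∏ k ∈ Finset.Icc 1 n, (1 - p ^ (2 * k))) ≠ 0 := prodD_ne_zero p hp n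
  have h2 : (1 - p ^ (2 * (n + 1))) ≠ 0 := sub_ne_zero.mpr (Ne.symm (hp _ (by omega)))
  have h3 : (n + 1) ^ 2 = n ^ 2 + (2 * n + 1) := by ring
  rw [h3, pow_add]
  field_simp

/-- coefficient of `f * monomial k a` -/
theorem coeff_mul_monomial' (φ : PowerSeries A) (k n : ℕ) (a : A) :
    (coeff n) (φ * monomial k a) = if k ≤ n then coeff (n - k) φ * a else 0 := by
  rw [coeff_mul]
  by_cases h : k ≤ n
  · rw [if_pos h, Finset.sum_eq_single (n - k, k)]
    · simp
    · rintro ⟨i, j⟩ hij hne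
      simp only [Finset.HasAntidiagonal.mem_antidiagonal] at hij
      rw [coeff_monomial]
      by_cases hj : j = k
      · exact absurd (by subst hj; simp [Prod.ext_iff]; omega) hne
      · rw [if_neg hj, mul_zero]
    · intro h'; exact absurd (by simp [Finset.HasAntidiagonal.mem_antidiagonal]; omega) h'
  · rw [if_neg h, Finset.sum_eq_zero]
    rintro ⟨i, j⟩ hij
    simp only [Finset.HasAntidiagonal.mem_antidiagonal] at hij
    rw [coeff_monomial, if_neg (by omega), mul_zero]

theorem coeff_monomial_mul' (φ : PowerSeries A) (k n : ℕ) (a : A) :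
    (coeff n) (monomial k a * φ) = if k ≤ n then a * coeff (n - k) φ else 0 := by
  rw [coeff_mul]
  by_cases h : k ≤ n
  · rw [if_pos h, Finset.sum_eq_single (k, n - k)]
    · simp
    · rintro ⟨i, j⟩ hij hne
      simp only [Finset.HasAntidiagonal.mem_antidiagonal] at hij
      rw [coeff_monomial]
      by_cases hi : i = k
      · exact absurd (by subst hi; simp [Prod.ext_iff]; omega) hne
      · rw [if_neg hi, zero_mul]
    · intro h'; exact absurd (by simp [Finset.HasAntidiagonal.mem_antidiagonal]; omega) h'
  · rw [if_neg h, Finset.sum_eq_zero]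
    rintro ⟨i, j⟩ hij
    simp only [Finset.HasAntidiagonal.mem_antidiagonal] at hij
    rw [coeff_monomial, if_neg (by omega), zero_mul]

/-- functional equation of Psi -/
lemma Psi_funeq (p : K) (hp : ∀ n : ℕ, 1 ≤ n → p ^ n ≠ 1) (m : ℕ) (hm : 1 ≤ m) (a : A) :
    Psi A p m a = Psi A p m ((p ^ 2) • a) + monomial m (p • a) * Psi A p m ((p ^ 2) • a) := by
  ext n
  rw [map_add, coeff_Psi, coeff_Psi, coeff_monomial_mul']
  by_cases hdvd : m ∣ n
  · obtain ⟨j, rfl⟩ := hdvd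
    rcases Nat.eq_zero_or_pos j with rfl | hj
    · rw [Nat.mul_zero, if_pos (dvd_zero m), if_pos (dvd_zero m), if_neg (by omega : ¬ m ≤ 0)]
      simp
    · obtain ⟨i, rfl⟩ : ∃ i, j = i + 1 := ⟨j - 1, by omega⟩
      have h1 : m ≤ m * (i + 1) := Nat.le_mul_of_pos_right m (by omega)
      have h2 : m * (i + 1) - m = m * i := by ring_nf; omega
      have h3 : m * (i + 1) / m = i + 1 := Nat.mul_div_cancel_left _ (by omega)
      have h4 : m * i / m = i := Nat.mul_div_cancel_left _ (by omega)
      rw [if_pos h1, if_pos ⟨i + 1, rfl⟩, h2, if_pos ⟨i + 1, rfl⟩, coeff_Psi,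
        if_pos ⟨i, rfl⟩, h3, h4]
      have h5 := alf_succ p hp i
      have e1 : (p • a) * (alf p i • ((p ^ 2) • a) ^ i) = (alf p i * (p ^ 2) ^ i * p) • a ^ (i+1) := by
        rw [smul_pow, smul_smul, mul_smul_comm, smul_mul_assoc, smul_smul, ← pow_succ']
      rw [e1, smul_pow, smul_smul, ← add_smul]
      congr 1
      linear_combination h5
  · rw [if_neg hdvd, if_neg hdvd]
    by_cases h : m ≤ n
    · have : ¬ m ∣ (n - m) := by
        intro ⟨j, hjj⟩; exact hdvd ⟨j + 1, by rw [Nat.mul_succ, ← hjj]; omega⟩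
      rw [if_pos h, coeff_Psi, if_neg this, mul_zero, add_zero]
    · rw [if_neg h, add_zero]

/-- commutation of Psi with a monomial -/
lemma Psi_mul_monomial (p : K) (m k : ℕ) (a z : A) (ρ : K) (h : a * z = ρ • (z * a)) :
    Psi A p m a * monomial k z = monomial k z * Psi A p m (ρ • a) := by
  have hpow : ∀ j : ℕ, a ^ j * z = (ρ ^ j) • (z * a ^ j) := by
    intro j
    induction j with
    | zero => simp
    | succ i ih =>
        rw [pow_succ, mul_assoc, h, mul_smul_comm, ← mul_assoc, ih, smul_mul_assoc,
          smul_smul, mul_assoc, pow_succ, mul_comm (ρ ^ i) ρ]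
  ext n
  rw [coeff_mul_monomial', coeff_monomial_mul']
  by_cases hkn : k ≤ n
  · rw [if_pos hkn, if_pos hkn, coeff_Psi, coeff_Psi]
    by_cases hdvd : m ∣ (n - k)
    · rw [if_pos hdvd, if_pos hdvd]
      calc (alf p ((n-k)/m) • a ^ ((n-k)/m)) * z
          = alf p ((n-k)/m) • (a ^ ((n-k)/m) * z) := smul_mul_assoc _ _ _
        _ = alf p ((n-k)/m) • (ρ ^ ((n-k)/m) • (z * a ^ ((n-k)/m))) := by rw [hpow]
        _ = (alf p ((n-k)/m) * ρ ^ ((n-k)/m)) • (z * a ^ ((n-k)/m)) := smul_smul _ _ _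
        _ = z * ((alf p ((n-k)/m) * ρ ^ ((n-k)/m)) • a ^ ((n-k)/m)) := (mul_smul_comm _ _ _).symm
        _ = z * (alf p ((n-k)/m) • (ρ • a) ^ ((n-k)/m)) := by
              rw [smul_pow, smul_smul]
    · simp [if_neg hdvd]
  · simp [if_neg hkn]

/-- rescaling (noncommutative version) -/
noncomputable def resc (r : K) (f : PowerSeries A) : PowerSeries A :=
  PowerSeries.mk fun n => r ^ n • coeff n f

lemma coeff_resc (r : K) (f : PowerSeries A) (n : ℕ) :
    coeff n (resc r f) = r ^ n • coeff n f := coeff_mk _ _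

lemma resc_mul (r : K) (f g : PowerSeries A) : resc r (f * g) = resc r f * resc r g := by
  ext n
  rw [coeff_resc, coeff_mul, coeff_mul, Finset.smul_sum]
  apply Finset.sum_congr rfl
  rintro ⟨i, j⟩ hij
  rw [coeff_resc, coeff_resc, smul_mul_assoc, mul_smul_comm, smul_smul, ← pow_add,
    Finset.HasAntidiagonal.mem_antidiagonal.mp hij]

lemma resc_Psi (r : K) (p : K) (m : ℕ) (a : A) :
    resc r (Psi A p m a) = Psi A p m ((r ^ m) • a) := by
  ext n
  rw [coeff_resc, coeff_Psi, coeff_Psi]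
  by_cases hdvd : m ∣ n
  · rw [if_pos hdvd, if_pos hdvd, smul_pow, smul_smul, smul_smul, ← pow_mul,
      Nat.mul_div_cancel' hdvd, mul_comm (alf p (n/m))]
  · simp [if_neg hdvd]


lemma coeff_ksmul (r : K) (n : ℕ) (f : PowerSeries A) :
    coeff n (r • f) = r • coeff n f := by simp

lemma key_scalar (p : K) (hp0 : p ≠ 0) (hp : ∀ n : ℕ, 1 ≤ n → p ^ n ≠ 1) (i : ℕ) :
    alf p (i+1) * p * (p * ((p^2) + 1) * ((p^2)^(i+1) - 1) * (p^2)^(i+1) / (p^2)^2)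
      = -((p + p⁻¹) * alf p i * p^(4*i+2)) := by
  have h1 : (1 - p ^ (2*(i+1))) ≠ 0 := sub_ne_zero.mpr (Ne.symm (hp _ (by omega)))
  have h2 := alf_succ p hp i
  have h3 : alf p (i+1) = p^(2*i+1) * alf p i / (1 - p^(2*(i+1))) := by
    rw [eq_div_iff h1, mul_comm]; linear_combination h2
  rw [h3]
  have h4 : (p^2)^(i+1) - 1 = -(1 - p^(2*(i+1))) := by rw [← pow_mul]; ring_nf
  rw [h4]
  field_simp
  ring

lemma key_pow (p : K) (c v d : A) (σ : ℕ → K) (κ : K) (hσ1 : σ 1 = κ)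
    (hσs : ∀ i : ℕ, σ (i+2) = (p^2)^(i+1) * κ + (p^2)^2 * σ (i+1))
    (hcv : c * v = (p^2) • (v * c) + κ • d)
    (hcd : c * d = ((p^2)^2) • (d * c)) :
    ∀ i : ℕ, c^(i+1) * v = ((p^2)^(i+1)) • (v * c^(i+1)) + σ (i+1) • (d * c^i) := by
  intro i
  induction i with
  | zero => simpa [hσ1] using hcv
  | succ i ih =>
      calc c^(i+2) * v = c * (c^(i+1) * v) := by rw [← mul_assoc, ← pow_succ']
        _ = (p^2)^(i+1) • (c * (v * c^(i+1))) + σ (i+1) • (c * (d * c^i)) := by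
              rw [ih, mul_add, mul_smul_comm, mul_smul_comm]
        _ = (p^2)^(i+1) • ((c * v) * c^(i+1)) + σ (i+1) • ((c * d) * c^i) := by
              rw [mul_assoc, mul_assoc]
        _ = (p^2)^(i+1) • ((((p^2) • (v * c) + κ • d)) * c^(i+1))
              + σ (i+1) • ((((p^2)^2) • (d * c)) * c^i) := by rw [hcv, hcd]
        _ = (p^2)^(i+2) • (v * c^(i+2)) + σ (i+2) • (d * c^(i+1)) := by
              rw [add_mul, smul_mul_assoc, smul_mul_assoc, smul_mul_assoc,
                mul_assoc v, mul_assoc d, ← pow_succ', ← pow_succ', hσs i]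
              module

lemma key_I (p : K) (hp0 : p ≠ 0) (hp : ∀ n : ℕ, 1 ≤ n → p ^ n ≠ 1)
    (c v d b : A) (hb : b = (p + p⁻¹) • d)
    (hcv : c * v = (p^2) • (v * c) + (p * (p^2 - (p^2)⁻¹)) • d)
    (hcd : c * d = ((p^2)^2) • (d * c)) (μ : K) :
    Psi A p 1 (μ • c) * monomial 1 (p • v)
      = monomial 1 (p • v) * Psi A p 1 ((p^2 * μ) • c)
        - μ • (monomial 2 ((p^2) • b) * Psi A p 1 (((p^2)^2 * μ) • c)) := by
  have hp2 : (p^2 : K) ≠ 0 := pow_ne_zero 2 hp0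
  set σ : ℕ → K := fun j => p * ((p^2) + 1) * ((p^2)^j - 1) * (p^2)^j / (p^2)^2 with hσ
  have hσ1 : σ 1 = p * (p^2 - (p^2)⁻¹) := by
    simp only [hσ]; field_simp; ring
  have hσs : ∀ i : ℕ, σ (i+2) = (p^2)^(i+1) * (p * (p^2 - (p^2)⁻¹)) + (p^2)^2 * σ (i+1) := by
    intro i; simp only [hσ]; field_simp; ring
  have hpow := key_pow p c v d σ _ hσ1 hσs hcv hcd
  ext N
  rw [map_sub, coeff_mul_monomial', coeff_monomial_mul', coeff_ksmul, coeff_monomial_mul']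
  match N with
  | 0 => simp
  | 1 =>
      rw [if_pos (le_refl 1), if_neg (by omega : ¬ (2:ℕ) ≤ 1)]
      simp [coeff_Psi, alf_zero]
  | (i+2) =>
      have t1 : (1:ℕ) ≤ i+2 := by omega
      have t2 : (2:ℕ) ≤ i+2 := by omega
      rw [if_pos t1, if_pos t1, if_pos t2]
      have e1 : i + 2 - 1 = i + 1 := rfl
      have e2 : i + 2 - 2 = i := rfl
      rw [e1, e2, coeff_Psi, coeff_Psi, coeff_Psi,
        if_pos (one_dvd _), if_pos (one_dvd _), if_pos (one_dvd _)]
      simp only [Nat.div_one]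
      rw [hb]
      simp only [smul_pow, smul_smul, smul_mul_assoc, mul_smul_comm]
      rw [hpow i]
      simp only [smul_add, smul_smul]
      rw [sub_eq_add_neg, ← neg_smul]
      congr 1
      · congr 1; ring
      · congr 1
        simp only [hσ]
        have ks := key_scalar p hp0 hp i
        linear_combination μ^(i+1) * ks

lemma monomial_ksmul (r : K) (k : ℕ) (a : A) :
    monomial k (r • a) = r • monomial k a := by
  ext n; simp [coeff_monomial]

lemma smul_mul_smul_comm' (s t ρ : K) (x y : A) (h : x * y = ρ • (y * x)) :
    (s • x) * (t • y) = ρ • ((t • y) * (s • x)) := by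
  calc (s • x) * (t • y) = (s * t) • (x * y) := by
        rw [smul_mul_assoc, mul_smul_comm, smul_smul]
    _ = (s * t) • (ρ • (y * x)) := by rw [h]
    _ = ρ • ((t • y) * (s • x)) := by
        rw [smul_mul_assoc, mul_smul_comm, smul_smul, smul_smul, smul_smul]
        module

lemma monomial_mul_monomial'' (k l : ℕ) (a z : A) :
    monomial k a * monomial l z = monomial (k + l) (a * z) := by
  ext n
  rw [coeff_mul_monomial', coeff_monomial, coeff_monomial]
  by_cases h : l ≤ n
  · rw [if_pos h]
    by_cases h2 : n - l = k
    · rw [if_pos h2, if_pos (by omega)]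
    · rw [if_neg h2, if_neg (by omega), zero_mul]
  · rw [if_neg h, if_neg (by omega)]

lemma constCoeff_Psi (p : K) (m : ℕ) (a : A) :
    coeff 0 (Psi A p m a) = 1 := by
  rw [coeff_Psi, if_pos (dvd_zero m)]
  simp [alf_zero]

lemma uniq (p : K) (hp : ∀ n : ℕ, 1 ≤ n → p ^ n ≠ 1) (w : A) (S1 S2 : PowerSeries A)
    (h1 : S1 = resc (p^2) S1 + monomial 1 w * resc (p^2) S1)
    (h2 : S2 = resc (p^2) S2 + monomial 1 w * resc (p^2) S2)
    (h0 : coeff 0 S1 = coeff 0 S2) : S1 = S2 := by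
  ext n
  induction n with
  | zero => exact h0
  | succ n ih =>
      have key : ∀ S : PowerSeries A, (S = resc (p^2) S + monomial 1 w * resc (p^2) S) →
          (1 - (p^2)^(n+1)) • coeff (n+1) S = w * ((p^2)^n • coeff n S) := by
        intro S hS
        have h := congrArg (coeff (n+1)) hS
        rw [map_add, coeff_resc, coeff_monomial_mul', if_pos (by omega : 1 ≤ n+1)] at h
        have e : n + 1 - 1 = n := rfl
        rw [e, coeff_resc] at h
        calc (1 - (p^2)^(n+1)) • coeff (n+1) S
            = coeff (n+1) S - (p^2)^(n+1) • coeff (n+1) S := by rw [sub_smul, one_smul]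
          _ = ((p^2)^(n+1) • coeff (n+1) S + w * ((p^2)^n • coeff n S))
                - (p^2)^(n+1) • coeff (n+1) S := by rw [← h]
          _ = w * ((p^2)^n • coeff n S) := add_sub_cancel_left _ _
      have e1 := key S1 h1
      have e2 := key S2 h2
      rw [ih] at e1
      have hne : (1 - (p^2)^(n+1)) ≠ 0 := sub_ne_zero.mpr
        (Ne.symm (by rw [← pow_mul]; exact hp _ (by omega)))
      have := congrArg (fun x => (1 - (p^2)^(n+1))⁻¹ • x) (e1.trans e2.symm)
      simpa [smul_smul, inv_mul_cancel₀ hne] using this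

end QDL

open QDL in
/-- quantum exponential relation, doubly-laced case: with `q = q_s²`,
`c := (u·v − v·u)/(q_s − q_s⁻¹)` and `d := (q_s⁻¹·c·v − q_s·v·c)/(q − q⁻¹)`,
if `u·c = q²·c·u`, `c·d = q²·d·c`, `d·v = q²·v·d` and
`(q⁻¹·u·d − q·d·u)/(q − q⁻¹) = c²/(q_s + q_s⁻¹)²`, then
`Ψ_{q_s}⁽¹⁾(c + v) = Ψ_{q_s}⁽¹⁾(c)·Ψ_q⁽²⁾((q_s + q_s⁻¹)·d)·Ψ_{q_s}⁽¹⁾(v)`. -/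
theorem quantum_exponential_relation_doubly_laced
    {K : Type*} [Field K] (qs : K) (hqs0 : qs ≠ 0) (hqs : ∀ n : ℕ, 1 ≤ n → qs ^ n ≠ 1)
    (q : K) (hq : q = qs ^ 2)
    {A : Type*} [Ring A] [Algebra K A]
    (u v c d : A)
    (hc : c = (qs - qs⁻¹)⁻¹ • (u * v - v * u))
    (hd : d = (q - q⁻¹)⁻¹ • (qs⁻¹ • (c * v) - qs • (v * c)))
    (huc : u * c = (q ^ 2) • (c * u))
    (hcd : c * d = (q ^ 2) • (d * c))
    (hdv : d * v = (q ^ 2) • (v * d))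
    (hud : (q - q⁻¹)⁻¹ • (q⁻¹ • (u * d) - q • (d * u)) = ((qs + qs⁻¹) ^ 2)⁻¹ • c ^ 2) :
    Psi A qs 1 (c + v) = Psi A qs 1 c * Psi A q 2 ((qs + qs⁻¹) • d) * Psi A qs 1 v := by
  subst hq
  clear hc huc hud u
  obtain ⟨b, hbdef⟩ : ∃ b : A, b = (qs + qs⁻¹) • d := ⟨_, rfl⟩
  rw [← hbdef]
  -- scalar facts
  have hqv : ∀ n : ℕ, 1 ≤ n → ((qs^2 : K))^n ≠ 1 := by
    intro n hn; rw [← pow_mul]; exact hqs (2*n) (by omega)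
  have hq2 : (qs^2 : K) ≠ 0 := pow_ne_zero 2 hqs0
  have he : ((qs^2 : K) - (qs^2)⁻¹) ≠ 0 := by
    refine sub_ne_zero.mpr ?_
    intro h
    have h4 : (qs:K)^4 = 1 := by
      rw [show (4:ℕ) = 2+2 from rfl, pow_add]
      nth_rewrite 2 [h]
      exact mul_inv_cancel₀ hq2
    exact hqs 4 (by omega) h4
  -- element relations
  have hcb : c * b = ((qs^2)^2) • (b * c) := by
    rw [hbdef, mul_smul_comm, hcd, smul_mul_assoc, smul_smul, smul_smul, mul_comm]
  have hbv : b * v = ((qs^2)^2) • (v * b) := by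
    rw [hbdef, smul_mul_assoc, hdv, mul_smul_comm, smul_smul, smul_smul, mul_comm]
  have hed : ((qs^2 : K) - (qs^2)⁻¹) • d = qs⁻¹ • (c * v) - qs • (v * c) := by
    rw [hd, smul_smul, mul_inv_cancel₀ he, one_smul]
  have hcv : c * v = (qs^2) • (v * c) + (qs * ((qs^2) - (qs^2)⁻¹)) • d := by
    have h1 : (qs * ((qs^2 : K) - (qs^2)⁻¹)) • d
        = c * v - (qs * qs) • (v * c) := by
      rw [← smul_smul, hed, smul_sub, smul_smul, mul_inv_cancel₀ hqs0, one_smul, smul_smul]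
    rw [h1, pow_two]
    abel
  have hcv' : c * v = (qs^2) • (v * c) + (qs * ((qs^2) - ((qs^2))⁻¹)) • d := hcv
  -- series
  set P1 := Psi A qs 1 c with hP1
  set Pq := Psi A qs 1 ((qs^2) • c) with hPq
  set P2 := Psi A qs 1 (((qs^2)^2) • c) with hP2
  set P3 := Psi A qs 1 (((qs^2)^3) • c) with hP3
  set P4 := Psi A qs 1 (((qs^2)^4) • c) with hP4
  set Q1 := Psi A (qs^2) 2 b with hQ1
  set Q2 := Psi A (qs^2) 2 (((qs^2)^2) • b) with hQ2d
  set Q4 := Psi A (qs^2) 2 (((qs^2)^4) • b) with hQ4d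
  set V1 := Psi A qs 1 v with hV1
  set Vq := Psi A qs 1 ((qs^2) • v) with hVq
  set Xm := monomial 1 (qs • c) with hXm
  set M1 := monomial 1 (qs • v) with hM1
  set Zm := monomial 2 ((qs^2) • b) with hZm
  -- functional equations
  have fP1 : P1 = Pq + Xm * Pq := Psi_funeq qs hqs 1 le_rfl c
  have fQ1 : Q1 = Q2 + Zm * Q2 := Psi_funeq (qs^2) hqv 2 (by omega) b
  have fV1 : V1 = Vq + M1 * Vq := Psi_funeq qs hqs 1 le_rfl v
  have fQ2 : Q2 = Q4 + (qs^2)^2 • (Zm * Q4) := by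
    have h := Psi_funeq (qs^2) hqv 2 (by omega) (((qs^2)^2) • b)
    rw [smul_smul, smul_smul, show ((qs^2:K)^2*(qs^2)^2) = (qs^2)^4 by ring,
      show ((qs^2:K)*(qs^2)^2) = (qs^2)^2*(qs^2) by ring, ← smul_smul,
      monomial_ksmul, smul_mul_assoc] at h
    exact h
  have fP2 : P2 = P3 + (qs^2)^2 • (Xm * P3) := by
    have h := Psi_funeq qs hqs 1 le_rfl (((qs^2)^2) • c)
    rw [smul_smul, smul_smul, show ((qs:K)^2*(qs^2)^2) = (qs^2)^3 by ring,
      show ((qs:K)*(qs^2)^2) = (qs^2)^2*qs by ring, ← smul_smul,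
      monomial_ksmul, smul_mul_assoc] at h
    exact h
  -- commutations
  have cPZ1 : P1 * Zm = Zm * P2 := by
    have h := Psi_mul_monomial qs 1 2 c ((qs^2) • b) ((qs^2)^2)
      (by rw [mul_smul_comm, hcb, smul_mul_assoc, smul_smul, smul_smul, mul_comm])
    rwa [] at h
  have cPZq : Pq * Zm = Zm * P3 := by
    have h := Psi_mul_monomial qs 1 2 ((qs^2) • c) ((qs^2) • b) ((qs^2)^2)
      (smul_mul_smul_comm' _ _ _ _ _ hcb)
    rwa [smul_smul, show ((qs^2:K)^2*(qs^2)) = (qs^2)^3 by ring] at h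
  have cPZ2 : P2 * Zm = Zm * P4 := by
    have h := Psi_mul_monomial qs 1 2 (((qs^2)^2) • c) ((qs^2) • b) ((qs^2)^2)
      (smul_mul_smul_comm' _ _ _ _ _ hcb)
    rwa [smul_smul, show ((qs^2:K)^2*(qs^2)^2) = (qs^2)^4 by ring] at h
  have cQM2 : Q2 * M1 = M1 * Q4 := by
    have h := Psi_mul_monomial (qs^2) 2 1 (((qs^2)^2) • b) (qs • v) ((qs^2)^2)
      (smul_mul_smul_comm' _ _ _ _ _ hbv)
    rwa [smul_smul, show ((qs^2:K)^2*(qs^2)^2) = (qs^2)^4 by ring] at h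
  have cZM : Zm * M1 = (qs^2)^2 • (M1 * Zm) := by
    rw [hZm, hM1, monomial_mul_monomial'', monomial_mul_monomial'',
      smul_mul_smul_comm' (qs^2) qs ((qs^2)^2) b v hbv, monomial_ksmul]
  have cXZ : Xm * Zm = (qs^2)^2 • (Zm * Xm) := by
    rw [hXm, hZm, monomial_mul_monomial'', monomial_mul_monomial'',
      smul_mul_smul_comm' qs (qs^2) ((qs^2)^2) c b hcb, monomial_ksmul]
  have kI1 : P1 * M1 = M1 * Pq - Zm * P2 := by
    have h := key_I qs hqs0 hqs c v d b hbdef hcv' hcd 1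
    rwa [one_smul, mul_one, mul_one, one_smul] at h
  have kI2 : P2 * M1 = M1 * P3 - (qs^2)^2 • (Zm * P4) := by
    have h := key_I qs hqs0 hqs c v d b hbdef hcv' hcd ((qs^2)^2)
    rwa [show ((qs:K)^2*(qs^2)^2) = (qs^2)^3 by ring,
      show ((qs^2:K)^2*(qs^2)^2) = (qs^2)^4 by ring] at h
  -- w-forms
  have cQM2w : ∀ w, Q2 * (M1 * w) = M1 * (Q4 * w) := fun w => by
    rw [← mul_assoc, cQM2, mul_assoc]
  have cPZ1w : ∀ w, P1 * (Zm * w) = Zm * (P2 * w) := fun w => by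
    rw [← mul_assoc, cPZ1, mul_assoc]
  have cPZqw : ∀ w, Pq * (Zm * w) = Zm * (P3 * w) := fun w => by
    rw [← mul_assoc, cPZq, mul_assoc]
  have cPZ2w : ∀ w, P2 * (Zm * w) = Zm * (P4 * w) := fun w => by
    rw [← mul_assoc, cPZ2, mul_assoc]
  have kI1w : ∀ w, P1 * (M1 * w) = M1 * (Pq * w) - Zm * (P2 * w) := fun w => by
    rw [← mul_assoc, kI1, sub_mul, mul_assoc, mul_assoc]
  have kI2w : ∀ w, P2 * (M1 * w) = M1 * (P3 * w) - (qs^2)^2 • (Zm * (P4 * w)) := fun w => by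
    rw [← mul_assoc, kI2, sub_mul, smul_mul_assoc, mul_assoc, mul_assoc]
  have cZMw : ∀ w, Zm * (M1 * w) = (qs^2)^2 • (M1 * (Zm * w)) := fun w => by
    rw [← mul_assoc, cZM, smul_mul_assoc, mul_assoc]
  have cXZw : ∀ w, Xm * (Zm * w) = (qs^2)^2 • (Zm * (Xm * w)) := fun w => by
    rw [← mul_assoc, cXZ, smul_mul_assoc, mul_assoc]
  have fQ2w : ∀ w, Q2 * w = Q4 * w + (qs^2)^2 • (Zm * (Q4 * w)) := fun w => by
    conv_lhs => rw [fQ2]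
    rw [add_mul, smul_mul_assoc, mul_assoc]
  have fP1w : ∀ w, P1 * w = Pq * w + Xm * (Pq * w) := fun w => by
    conv_lhs => rw [fP1]
    rw [add_mul, mul_assoc]
  have fP2w : ∀ w, P2 * w = P3 * w + (qs^2)^2 • (Xm * (P3 * w)) := fun w => by
    conv_lhs => rw [fP2]
    rw [add_mul, smul_mul_assoc, mul_assoc]
  -- the pentagon-type identity
  have star : P1 * (Q1 * V1) = Pq * (Q2 * Vq) + (Xm + M1) * (Pq * (Q2 * Vq)) := by
    conv_lhs => rw [fQ1, fV1]
    simp only [mul_add, add_mul, mul_assoc]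
    simp only [cQM2w]
    simp only [kI1w, kI2w, cPZ1w, mul_sub, sub_mul, mul_smul_comm, smul_mul_assoc,
      smul_sub, smul_smul, cZMw, mul_assoc]
    simp only [fQ2w, mul_add, add_mul, mul_smul_comm, smul_mul_assoc, smul_add,
      smul_smul, cPZ1w, cPZqw, cPZ2w, mul_assoc]
    simp only [fP1w, fP2w, cXZw, mul_add, add_mul, mul_smul_comm, smul_mul_assoc,
      smul_add, smul_smul, mul_assoc]
    abel
  -- conclude by uniqueness of solutions of the q-difference equation
  have hW : Xm + M1 = monomial 1 (qs • (c + v)) := by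
    rw [hXm, hM1, ← map_add, ← smul_add]
  have hresR : resc (qs^2) (P1 * Q1 * V1) = Pq * (Q2 * Vq) := by
    rw [mul_assoc, resc_mul, resc_mul, hP1, hQ1, hV1, resc_Psi, resc_Psi, resc_Psi,
      pow_one]
  apply uniq qs hqs (qs • (c + v))
  · have h := Psi_funeq qs hqs 1 le_rfl (c + v)
    rwa [resc_Psi, pow_one]
  · rw [hresR]
    calc P1 * Q1 * V1 = P1 * (Q1 * V1) := mul_assoc _ _ _
      _ = Pq * (Q2 * Vq) + (Xm + M1) * (Pq * (Q2 * Vq)) := star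
      _ = Pq * (Q2 * Vq) + monomial 1 (qs • (c + v)) * (Pq * (Q2 * Vq)) := by rw [hW]
  · have e : ∀ (p : K) (m : ℕ) (a : A), constantCoeff (Psi A p m a) = 1 := fun p m a => by
      rw [← coeff_zero_eq_constantCoeff]; exact constCoeff_Psi p m a
    simp only [hP1, hQ1, hV1, coeff_zero_eq_constantCoeff, map_mul, e, mul_one]
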